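/- If a random variable ζ satisfies E[exp(ζ²/σ²)] ≤ e for some σ > 0, then for every γ ≥ 0, E[exp(γζ)] ≤ exp(3γ²σ²/4 + 1) (and in particular, if additionally E[ζ] = 0, one has E[exp(γζ)] ≤ exp(γ²σ²)). -/

import Mathlib

open MeasureTheory Real

/-- Pointwise inequality: `exp x ≤ x + exp (x²)` for all real `x`. -/
lemma my_exp_le_add_exp_sq (x : ℝ) : Real.exp x ≤ x + Real.exp (x ^ 2) := by
  have hq := Real.add_one_le_exp (x ^ 2)
  rcases le_or_gt x (-1) with h | h
  · have h1 : Real.exp x ≤ 1 := Real.exp_le_one_iff.mpr (by linarith)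
    nlinarith
  rcases le_or_gt x 1 with h' | h'
  · have habs : |x| ≤ 1 := abs_le.mpr ⟨by linarith, h'⟩
    have h1 := (abs_le.mp (Real.abs_exp_sub_one_sub_id_le habs)).2
    linarith
  · have hxx : x ≤ x ^ 2 := by nlinarith
    have := Real.exp_le_exp.mpr hxx
    linarith

/-- Jensen's inequality for the concave function `x ↦ x ^ s` (`0 ≤ s ≤ 1`) on a probability
space: `E[f^s] ≤ (E[f])^s`. -/
lemma my_jensen_rpow {Ω : Type*} [MeasureSpace Ω] [IsProbabilityMeasure (volume : Measure Ω)]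
    (f : Ω → ℝ) (hf0 : ∀ ω, 0 ≤ f ω) (hf : Integrable f)
    {s : ℝ} (hs0 : 0 ≤ s) (hs1 : s ≤ 1)
    (hfs : Integrable (fun ω => f ω ^ s)) :
    (∫ ω, f ω ^ s) ≤ (∫ ω, f ω) ^ s :=
  ConcaveOn.le_map_integral (Real.concaveOn_rpow hs0 hs1)
    ((Real.continuous_rpow_const hs0).continuousOn) isClosed_Ici
    (Filter.Eventually.of_forall hf0) hf hfs

/-- Sub-Gaussian moment bound (part (a) of the key lemma): if `E[exp(ζ²/σ²)] ≤ e`,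
then for all `γ ≥ 0`, `E[exp(γζ)] ≤ exp(3γ²σ²/4 + 1)`; and if moreover `E[ζ] = 0`,
then `E[exp(γζ)] ≤ exp(γ²σ²)`. -/
theorem stmt_0 {Ω : Type*} [MeasureSpace Ω] [IsProbabilityMeasure (volume : Measure Ω)]
    (ζ : Ω → ℝ) (σ : ℝ) (hσ : 0 < σ) (hmeas : Measurable ζ)
    (hζint : Integrable ζ)
    (hint : Integrable (fun ω => Real.exp (ζ ω ^ 2 / σ ^ 2)))
    (hbound : ∫ ω, Real.exp (ζ ω ^ 2 / σ ^ 2) ≤ Real.exp 1) :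
    ∀ γ : ℝ, 0 ≤ γ →
      (∫ ω, Real.exp (γ * ζ ω)) ≤ Real.exp (3 * γ ^ 2 * σ ^ 2 / 4 + 1) ∧
      ((∫ ω, ζ ω) = 0 → (∫ ω, Real.exp (γ * ζ ω)) ≤ Real.exp (γ ^ 2 * σ ^ 2)) := by
  have hσ2 : (0 : ℝ) < σ ^ 2 := by positivity
  have hY0 : ∀ ω, 0 ≤ ζ ω ^ 2 / σ ^ 2 := fun ω => div_nonneg (sq_nonneg _) hσ2.le
  -- key power bound: for `0 ≤ s ≤ 1`, `E[exp(s ζ²/σ²)]` is integrable and `≤ exp s`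
  have key : ∀ s : ℝ, 0 ≤ s → s ≤ 1 →
      Integrable (fun ω => Real.exp (s * (ζ ω ^ 2 / σ ^ 2))) ∧
      (∫ ω, Real.exp (s * (ζ ω ^ 2 / σ ^ 2))) ≤ Real.exp s := by
    intro s hs0 hs1
    have hmY : Measurable fun ω => Real.exp (s * (ζ ω ^ 2 / σ ^ 2)) :=
      (measurable_const.mul ((hmeas.pow_const 2).div_const _)).exp
    have hmono : ∀ ω, Real.exp (s * (ζ ω ^ 2 / σ ^ 2)) ≤ Real.exp (ζ ω ^ 2 / σ ^ 2) := by
      intro ω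
      apply Real.exp_le_exp.mpr
      nlinarith [hY0 ω]
    have hintS : Integrable (fun ω => Real.exp (s * (ζ ω ^ 2 / σ ^ 2))) := by
      refine hint.mono' hmY.aestronglyMeasurable
        (Filter.Eventually.of_forall fun ω => ?_)
      rw [Real.norm_eq_abs, abs_of_pos (Real.exp_pos _)]
      exact hmono ω
    refine ⟨hintS, ?_⟩
    have heq : ∀ ω, Real.exp (s * (ζ ω ^ 2 / σ ^ 2)) =
        Real.exp (ζ ω ^ 2 / σ ^ 2) ^ s := by
      intro ω
      rw [← Real.exp_mul, mul_comm]
    calc (∫ ω, Real.exp (s * (ζ ω ^ 2 / σ ^ 2)))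
        = ∫ ω, Real.exp (ζ ω ^ 2 / σ ^ 2) ^ s := by
          exact integral_congr_ae (Filter.Eventually.of_forall heq)
      _ ≤ (∫ ω, Real.exp (ζ ω ^ 2 / σ ^ 2)) ^ s := by
          refine my_jensen_rpow _ (fun ω => (Real.exp_pos _).le) hint hs0 hs1 ?_
          have : (fun ω => Real.exp (ζ ω ^ 2 / σ ^ 2) ^ s)
              = fun ω => Real.exp (s * (ζ ω ^ 2 / σ ^ 2)) := by
            funext ω; rw [heq]
          rw [this]; exact hintS
      _ ≤ Real.exp 1 ^ s := by
          exact Real.rpow_le_rpow (integral_nonneg fun ω => (Real.exp_pos _).le) hbound hs0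
      _ = Real.exp s := Real.exp_one_rpow s
  intro γ hγ
  have ht0 : 0 ≤ γ ^ 2 * σ ^ 2 := by positivity
  -- pointwise bound for part 1
  have hpt1 : ∀ ω, Real.exp (γ * ζ ω) ≤
      Real.exp (γ ^ 2 * σ ^ 2 / 4) * Real.exp (ζ ω ^ 2 / σ ^ 2) := by
    intro ω
    rw [← Real.exp_add]
    apply Real.exp_le_exp.mpr
    have hk : γ * ζ ω - (γ ^ 2 * σ ^ 2 / 4 + ζ ω ^ 2 / σ ^ 2)
        = -((ζ ω / σ - γ * σ / 2) ^ 2) := by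
      field_simp
      ring
    nlinarith [sq_nonneg (ζ ω / σ - γ * σ / 2)]
  have hintG : Integrable (fun ω => Real.exp (γ * ζ ω)) := by
    refine (hint.const_mul (Real.exp (γ ^ 2 * σ ^ 2 / 4))).mono'
      ((measurable_const.mul hmeas).exp).aestronglyMeasurable
      (Filter.Eventually.of_forall fun ω => ?_)
    rw [Real.norm_eq_abs, abs_of_pos (Real.exp_pos _)]
    exact hpt1 ω
  have part1 : (∫ ω, Real.exp (γ * ζ ω)) ≤ Real.exp (γ ^ 2 * σ ^ 2 / 4 + 1) := by
    calc (∫ ω, Real.exp (γ * ζ ω))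
        ≤ ∫ ω, Real.exp (γ ^ 2 * σ ^ 2 / 4) * Real.exp (ζ ω ^ 2 / σ ^ 2) :=
          integral_mono hintG (hint.const_mul _) hpt1
      _ = Real.exp (γ ^ 2 * σ ^ 2 / 4) * ∫ ω, Real.exp (ζ ω ^ 2 / σ ^ 2) :=
          integral_const_mul _ _
      _ ≤ Real.exp (γ ^ 2 * σ ^ 2 / 4) * Real.exp 1 :=
          mul_le_mul_of_nonneg_left hbound (Real.exp_pos _).le
      _ = Real.exp (γ ^ 2 * σ ^ 2 / 4 + 1) := (Real.exp_add _ _).symm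
  constructor
  · exact part1.trans (Real.exp_le_exp.mpr (by nlinarith))
  · intro hmean
    rcases le_or_gt (γ ^ 2 * σ ^ 2) 1 with hts | hts
    · -- small case: use exp x ≤ x + exp (x²)
      obtain ⟨hintS, hS⟩ := key (γ ^ 2 * σ ^ 2) ht0 hts
      have hpt : ∀ ω, Real.exp (γ * ζ ω) ≤
          γ * ζ ω + Real.exp (γ ^ 2 * σ ^ 2 * (ζ ω ^ 2 / σ ^ 2)) := by
        intro ω
        have h := my_exp_le_add_exp_sq (γ * ζ ω)
        have heq : (γ * ζ ω) ^ 2 = γ ^ 2 * σ ^ 2 * (ζ ω ^ 2 / σ ^ 2) := by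
          field_simp
        rwa [heq] at h
      have hintg : Integrable
          (fun ω => γ * ζ ω + Real.exp (γ ^ 2 * σ ^ 2 * (ζ ω ^ 2 / σ ^ 2))) :=
        (hζint.const_mul γ).add hintS
      calc (∫ ω, Real.exp (γ * ζ ω))
          ≤ ∫ ω, (γ * ζ ω + Real.exp (γ ^ 2 * σ ^ 2 * (ζ ω ^ 2 / σ ^ 2))) :=
            integral_mono hintG hintg hpt
        _ = γ * (∫ ω, ζ ω) + ∫ ω, Real.exp (γ ^ 2 * σ ^ 2 * (ζ ω ^ 2 / σ ^ 2)) := by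
            rw [integral_add (hζint.const_mul γ) hintS, integral_const_mul]
        _ ≤ γ * 0 + Real.exp (γ ^ 2 * σ ^ 2) := by
            rw [hmean]
            linarith
        _ = Real.exp (γ ^ 2 * σ ^ 2) := by ring
    · -- large case: AM-GM with λ = 1/2
      obtain ⟨hintS, hS⟩ := key (1 / 2) (by norm_num) (by norm_num)
      have hpt : ∀ ω, Real.exp (γ * ζ ω) ≤
          Real.exp (γ ^ 2 * σ ^ 2 / 2) * Real.exp ((1 / 2) * (ζ ω ^ 2 / σ ^ 2)) := by
        intro ω
        rw [← Real.exp_add]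
        apply Real.exp_le_exp.mpr
        have hk : γ * ζ ω - (γ ^ 2 * σ ^ 2 / 2 + 1 / 2 * (ζ ω ^ 2 / σ ^ 2))
            = -((ζ ω / σ - γ * σ) ^ 2) / 2 := by
          field_simp
          ring
        nlinarith [sq_nonneg (ζ ω / σ - γ * σ)]
      calc (∫ ω, Real.exp (γ * ζ ω))
          ≤ ∫ ω, Real.exp (γ ^ 2 * σ ^ 2 / 2) * Real.exp ((1 / 2) * (ζ ω ^ 2 / σ ^ 2)) :=
            integral_mono hintG (hintS.const_mul _) hpt
        _ = Real.exp (γ ^ 2 * σ ^ 2 / 2) * ∫ ω, Real.exp ((1 / 2) * (ζ ω ^ 2 / σ ^ 2)) :=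
            integral_const_mul _ _
        _ ≤ Real.exp (γ ^ 2 * σ ^ 2 / 2) * Real.exp (1 / 2) :=
            mul_le_mul_of_nonneg_left hS (Real.exp_pos _).le
        _ = Real.exp (γ ^ 2 * σ ^ 2 / 2 + 1 / 2) := (Real.exp_add _ _).symm
        _ ≤ Real.exp (γ ^ 2 * σ ^ 2) := Real.exp_le_exp.mpr (by linarith)
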